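/- For all 𝔍, 𝔍' ∈ 𝒫₊, the adjoint of a basis element satisfies (Θ(C_𝔍) ∘ C_{𝔍'})* = q_𝔍·q_{𝔍'}·Θ(C_𝔍) ∘ C_{𝔍'}. -/

import Mathlib

open ComplexOrder

noncomputable section

/-- The setting of the paper: a finite set `Λ` with a fixed-point free involution `ϑ`
exchanging `Λp` and its complement, the Clifford algebra (algebra of Majoranas) `carrier`
with self-adjoint generators `c i`, the global gauge automorphism `gauge`, the antilinear
reflection `*`-automorphism `Θ`, a square root `ζ` of `-1`, the twisted product `twist`,
a choice `P` of orderings of the subsets of `Λp` (giving the bases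
`{C J : J ∈ P}` of `𝔄₊` and `{Θ(C J) ∘ C J' : J, J' ∈ P}` of `𝔄`),
and the tracial state `Tr` picking out the coefficient of `1` in the basis expansion. -/
structure MajoranaSetting where
  Λ : Type
  [fintypeΛ : Fintype Λ]
  [deceqΛ : DecidableEq Λ]
  ϑ : Λ → Λ
  ϑ_invol : Function.Involutive ϑ
  ϑ_fixfree : ∀ i, ϑ i ≠ i
  Λp : Finset Λ
  ϑ_exch : ∀ i, i ∈ Λp ↔ ϑ i ∉ Λp
  carrier : Type
  [nring : NormedRing carrier]
  [nalg : NormedAlgebra ℂ carrier]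
  [cmpl : CompleteSpace carrier]
  [starring : StarRing carrier]
  [starmod : StarModule ℂ carrier]
  c : Λ → carrier
  c_star : ∀ i, star (c i) = c i
  clifford : ∀ i j, c i * c j + c j * c i = if i = j then (2 : carrier) else 0
  gauge : carrier ≃ₐ[ℂ] carrier
  gauge_c : ∀ i, gauge (c i) = - c i
  Θ : carrier → carrier
  Θ_add : ∀ x y, Θ (x + y) = Θ x + Θ y
  Θ_smul : ∀ (z : ℂ) (x), Θ (z • x) = (starRingEnd ℂ z) • Θ x
  Θ_mul : ∀ x y, Θ (x * y) = Θ x * Θ y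
  Θ_star : ∀ x, Θ (star x) = star (Θ x)
  Θ_invol : ∀ x, Θ (Θ x) = x
  Θ_c : ∀ i, Θ (c i) = c (ϑ i)
  ζ : ℂ
  ζ_sq : ζ ^ 2 = -1
  twist : carrier → carrier → carrier
  twist_add_left : ∀ x x' y, twist (x + x') y = twist x y + twist x' y
  twist_add_right : ∀ x y y', twist x (y + y') = twist x y + twist x y'
  twist_smul_left : ∀ (z : ℂ) (x y), twist (z • x) y = z • twist x y
  twist_smul_right : ∀ (z : ℂ) (x y), twist x (z • y) = z • twist x y
  twist_spec : ∀ (Am Ap Bm Bp : carrier) (a b a' b' : ℕ),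
    a ≤ 1 → b ≤ 1 → a' ≤ 1 → b' ≤ 1 →
    Am ∈ Algebra.adjoin ℂ (c '' {i | i ∉ Λp}) →
    Ap ∈ Algebra.adjoin ℂ (c '' {i | i ∈ Λp}) →
    Bm ∈ Algebra.adjoin ℂ (c '' {i | i ∉ Λp}) →
    Bp ∈ Algebra.adjoin ℂ (c '' {i | i ∈ Λp}) →
    gauge Am = ((-1 : ℂ) ^ a) • Am →
    gauge Ap = ((-1 : ℂ) ^ b) • Ap →
    gauge Bm = ((-1 : ℂ) ^ a') • Bm →
    gauge Bp = ((-1 : ℂ) ^ b') • Bp →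
    twist (Am * Ap) (Bm * Bp)
      = ζ ^ ((a * b' : ℤ) - (b * a' : ℤ)) • (Am * Ap * (Bm * Bp))
  P : Finset (List Λ)
  P_nodup : ∀ J ∈ P, J.Nodup
  P_sub : ∀ J ∈ P, ∀ i ∈ J, i ∈ Λp
  P_unique : ∀ s : Finset Λ, s ⊆ Λp → ∃! J, J ∈ P ∧ J.toFinset = s
  Tr : carrier →ₗ[ℂ] ℂ
  Tr_basis : ∀ J ∈ P, ∀ J' ∈ P,
    Tr (twist (Θ ((J.map c).prod)) ((J'.map c).prod))
      = if J = [] ∧ J' = [] then 1 else 0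
  basis_indep : LinearIndependent ℂ
    (fun p : {J // J ∈ P} × {J // J ∈ P} =>
      twist (Θ ((p.1.1.map c).prod)) ((p.2.1.map c).prod))
  basis_span : ∀ x : carrier, x ∈ Submodule.span ℂ
    (Set.range fun p : {J // J ∈ P} × {J // J ∈ P} =>
      twist (Θ ((p.1.1.map c).prod)) ((p.2.1.map c).prod))
  plus_span : ∀ x ∈ Algebra.adjoin ℂ (c '' {i | i ∈ Λp}),
    x ∈ Submodule.span ℂ (Set.range fun J : {J // J ∈ P} => ((J.1.map c).prod))

attribute [instance] MajoranaSetting.fintypeΛ MajoranaSetting.deceqΛ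
  MajoranaSetting.nring MajoranaSetting.nalg MajoranaSetting.cmpl
  MajoranaSetting.starring MajoranaSetting.starmod

namespace MajoranaSetting

variable (S : MajoranaSetting)

/-- The subalgebra `𝔄₊` generated by the Majoranas on the `+` side. -/
def Aplus : Subalgebra ℂ S.carrier := Algebra.adjoin ℂ (S.c '' {i | i ∈ S.Λp})

/-- The subalgebra `𝔄₋` generated by the Majoranas on the `-` side. -/
def Aminus : Subalgebra ℂ S.carrier := Algebra.adjoin ℂ (S.c '' {i | i ∉ S.Λp})

/-- The monomial `C_𝔍 = c_{i₁} ⋯ c_{i_k}`. -/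
def C (J : List S.Λ) : S.carrier := (J.map S.c).prod

/-- `q_𝔍 = (-1)^{k(k-1)/2}`. -/
def q (J : List S.Λ) : ℂ := (-1 : ℂ) ^ (J.length * (J.length - 1) / 2)

/-- `s_𝔍 = ζ^{k(k-1)/2}`. -/
def sgn (J : List S.Λ) : ℂ := S.ζ ^ (J.length * (J.length - 1) / 2)

/-- The exponential `e^x` in the (finite-dimensional) algebra `𝔄`. -/
def expm (x : S.carrier) : S.carrier := NormedSpace.exp x

/-- The Hamiltonian `H = -∑_{𝔍,𝔍' ∈ 𝒫₊} J_{𝔍𝔍'} Θ(C_𝔍) ∘ C_𝔍'`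
determined by coupling constants `Jc`. -/
def Ham (Jc : List S.Λ → List S.Λ → ℂ) : S.carrier :=
  - ∑ J ∈ S.P, ∑ J' ∈ S.P, Jc J J' • S.twist (S.Θ (S.C J)) (S.C J')

/-- The index type of the basis `{C J : J ∈ 𝒫₊}`. -/
abbrev PIdx := {J : List S.Λ // J ∈ S.P}

/-- The index type `𝒫₊ - {∅}` of couplings across the reflection plane. -/
abbrev PIdx0 := {p : S.PIdx // p.1 ≠ []}

/-- The full matrix of coupling constants. -/
def Jmat (Jc : List S.Λ → List S.Λ → ℂ) : Matrix S.PIdx S.PIdx ℂ :=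
  Matrix.of fun p q => Jc p.1 q.1

/-- The matrix `J⁰` of coupling constants across the reflection plane. -/
def Jmat0 (Jc : List S.Λ → List S.Λ → ℂ) : Matrix S.PIdx0 S.PIdx0 ℂ :=
  Matrix.of fun p q => Jc p.1.1 q.1.1

end MajoranaSetting

namespace MajoranaSetting

variable (S : MajoranaSetting)

lemma c_sq (i : S.Λ) : S.c i * S.c i = 1 := by
  have h := S.clifford i i
  rw [if_pos rfl] at h
  have h2 : (2:ℂ) • (S.c i * S.c i) = (2:ℂ) • (1 : S.carrier) := by
    rw [two_smul, two_smul, h, one_add_one_eq_two]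
  have := congrArg (fun x => (2⁻¹:ℂ) • x) h2
  simpa [smul_smul] using this

lemma anti {i j : S.Λ} (h : i ≠ j) : S.c i * S.c j = -(S.c j * S.c i) := by
  have hc := S.clifford i j
  rw [if_neg h] at hc
  exact eq_neg_of_add_eq_zero_left hc

lemma C_nil : S.C ([] : List S.Λ) = 1 := rfl

lemma C_cons (a : S.Λ) (L : List S.Λ) : S.C (a :: L) = S.c a * S.C L := by
  simp [C]

lemma Θ_one : S.Θ (1 : S.carrier) = 1 := by
  have h1 : S.Θ (S.Θ 1) = S.Θ (S.Θ 1) * S.Θ 1 := by rw [← S.Θ_mul, mul_one]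
  rw [S.Θ_invol] at h1
  simpa using h1.symm

lemma Θ_C (L : List S.Λ) : S.Θ (S.C L) = S.C (L.map S.ϑ) := by
  induction L with
  | nil => simpa [C_nil] using S.Θ_one
  | cons a L ih => rw [C_cons, S.Θ_mul, S.Θ_c, ih, List.map_cons, C_cons]

lemma C_mem (s : Set S.Λ) (L : List S.Λ) (h : ∀ i ∈ L, i ∈ s) :
    S.C L ∈ Algebra.adjoin ℂ (S.c '' s) := by
  induction L with
  | nil => rw [C_nil]; exact one_mem _
  | cons a L ih =>
    rw [C_cons]
    exact mul_mem (Algebra.subset_adjoin ⟨a, h a (by simp), rfl⟩)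
      (ih fun i hi => h i (by simp [hi]))

lemma gauge_C (L : List S.Λ) : S.gauge (S.C L) = ((-1:ℂ)^L.length) • S.C L := by
  induction L with
  | nil => simp [C_nil]
  | cons a L ih =>
    rw [C_cons, map_mul, S.gauge_c, ih, List.length_cons, pow_succ]
    rw [neg_mul, mul_smul_comm, mul_comm ((-1:ℂ)^L.length) (-1:ℂ), mul_smul, neg_one_smul]

lemma neg_one_pow_mod (n : ℕ) : ((-1:ℂ))^(n % 2) = (-1:ℂ)^n := by
  conv_rhs => rw [← Nat.div_add_mod n 2]
  rw [pow_add, pow_mul]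
  norm_num

lemma move (a : S.Λ) (L : List S.Λ) (h : ∀ j ∈ L, j ≠ a) :
    S.C L * S.c a = ((-1:ℂ)^L.length) • (S.c a * S.C L) := by
  induction L with
  | nil => simp [C_nil]
  | cons b L ih =>
    have hb : S.c b * S.c a = -(S.c a * S.c b) := S.anti (h b (by simp))
    rw [C_cons, mul_assoc, ih (fun j hj => h j (by simp [hj]))]
    rw [mul_smul_comm, ← mul_assoc, hb, neg_mul, List.length_cons, pow_succ,
      mul_comm ((-1:ℂ)^L.length) (-1:ℂ), mul_smul, neg_one_smul, mul_assoc, ← C_cons, smul_neg]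

lemma tri (n : ℕ) : (n+1)*n/2 = n + n*(n-1)/2 := by
  cases n with
  | zero => rfl
  | succ m =>
    have h1 : (m+1+1)*(m+1) = 2*(m+1) + (m+1)*m := by ring
    have h2 : (m+1)*m = m*(m+1) := by ring
    have h3 : m*(m+1) % 2 = 0 := Nat.even_iff.mp (Nat.even_mul_succ_self m)
    simp only [Nat.succ_sub_one]
    omega

lemma q_cons (a : S.Λ) (L : List S.Λ) : S.q (a :: L) = (-1:ℂ)^L.length * S.q L := by
  unfold q
  rw [← pow_add, List.length_cons, Nat.add_sub_cancel]
  congr 1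
  exact tri L.length

lemma star_C (L : List S.Λ) (h : L.Nodup) : star (S.C L) = S.q L • S.C L := by
  induction L with
  | nil => simp [C_nil, q]
  | cons a L ih =>
    rw [List.nodup_cons] at h
    rw [C_cons, star_mul, ih h.2, S.c_star, smul_mul_assoc,
      S.move a L (fun j hj => fun he => h.1 (he ▸ hj)), smul_smul, S.q_cons, ← C_cons]
    ring_nf

lemma comm_C (L1 L2 : List S.Λ) (h : ∀ i ∈ L1, ∀ j ∈ L2, i ≠ j) :
    S.C L1 * S.C L2 = ((-1:ℂ)^(L1.length * L2.length)) • (S.C L2 * S.C L1) := by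
  induction L1 with
  | nil => simp [C_nil]
  | cons a L1 ih =>
    have hmv := S.move a L2 (fun j hj => fun he => h a (by simp) j hj he.symm)
    have hmv' : S.c a * S.C L2 = ((-1:ℂ)^L2.length) • (S.C L2 * S.c a) := by
      rw [hmv, smul_smul, ← pow_add, ← two_mul, pow_mul]
      norm_num
    rw [C_cons, mul_assoc, ih (fun i hi => h i (by simp [hi])), mul_smul_comm,
      ← mul_assoc, hmv', smul_mul_assoc, smul_smul, ← pow_add, mul_assoc, ← C_cons]
    congr 2
    rw [List.length_cons]
    ring

lemma conj_zeta : (starRingEnd ℂ) S.ζ = - S.ζ := by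
  have hz : (S.ζ - Complex.I) * (S.ζ + Complex.I) = 0 := by
    have h := S.ζ_sq
    have hI := Complex.I_sq
    ring_nf
    ring_nf at h hI
    rw [h, hI]; ring
  rcases mul_eq_zero.mp hz with h | h
  · have : S.ζ = Complex.I := by linear_combination h
    rw [this, Complex.conj_I]
  · have : S.ζ = -Complex.I := by linear_combination h
    rw [this]
    simp [Complex.conj_I]

lemma key (k k' : ℕ) :
    (starRingEnd ℂ) (S.ζ^((k % 2)*(k' % 2))) * (-1:ℂ)^(k'*k) = S.ζ^((k % 2)*(k' % 2)) := by
  rcases Nat.even_or_odd k with hk | hk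
  · have h0 : k % 2 = 0 := Nat.even_iff.mp hk
    have he : Even (k' * k) := hk.mul_left k'
    rw [h0, he.neg_one_pow]
    simp
  rcases Nat.even_or_odd k' with hk' | hk'
  · have h0 : k' % 2 = 0 := Nat.even_iff.mp hk'
    have he : Even (k' * k) := hk'.mul_right k
    rw [h0, he.neg_one_pow]
    simp
  · have h1 : k % 2 = 1 := Nat.odd_iff.mp hk
    have h1' : k' % 2 = 1 := Nat.odd_iff.mp hk'
    have ho : Odd (k' * k) := hk'.mul hk
    rw [h1, h1', ho.neg_one_pow]
    simp [S.conj_zeta]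

end MajoranaSetting

/-- `(Θ(C_𝔍) ∘ C_𝔍')* = q_𝔍 q_𝔍' Θ(C_𝔍) ∘ C_𝔍'` for `𝔍, 𝔍' ∈ 𝒫₊`. -/
theorem basis_adjoint (S : MajoranaSetting) (J J' : List S.Λ)
    (hJ : J ∈ S.P) (hJ' : J' ∈ S.P) :
    star (S.twist (S.Θ (S.C J)) (S.C J'))
      = (S.q J * S.q J') • S.twist (S.Θ (S.C J)) (S.C J') := by
  have hnJ := S.P_nodup J hJ
  have hnJ' := S.P_nodup J' hJ'
  have hsubJ := S.P_sub J hJ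
  have hsubJ' := S.P_sub J' hJ'
  set Jm := J.map S.ϑ with hJmdef
  have hΘ : S.Θ (S.C J) = S.C Jm := S.Θ_C J
  have hlen : Jm.length = J.length := List.length_map S.ϑ
  have memAm : S.C Jm ∈ Algebra.adjoin ℂ (S.c '' {i | i ∉ S.Λp}) := by
    apply S.C_mem
    intro i hi
    rcases List.mem_map.mp hi with ⟨j, hj, rfl⟩
    exact (S.ϑ_exch j).mp (hsubJ j hj)
  have memBp : S.C J' ∈ Algebra.adjoin ℂ (S.c '' {i | i ∈ S.Λp}) := S.C_mem _ _ hsubJ'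
  have gAm : S.gauge (S.C Jm) = ((-1:ℂ)^(J.length % 2)) • S.C Jm := by
    rw [S.gauge_C, MajoranaSetting.neg_one_pow_mod, hlen]
  have gBp : S.gauge (S.C J') = ((-1:ℂ)^(J'.length % 2)) • S.C J' := by
    rw [S.gauge_C, MajoranaSetting.neg_one_pow_mod]
  have g1 : S.gauge (1:S.carrier) = ((-1:ℂ)^(0:ℕ)) • (1:S.carrier) := by simp
  have tw := S.twist_spec (S.C Jm) 1 1 (S.C J') (J.length % 2) 0 0 (J'.length % 2)
    (by omega) (by omega) (by omega) (by omega)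
    memAm (one_mem _) (one_mem _) memBp gAm g1 g1 gBp
  rw [mul_one, one_mul] at tw
  have hexp : S.ζ ^ (((J.length % 2 : ℕ) : ℤ) * ((J'.length % 2 : ℕ) : ℤ)
        - ((0:ℕ) : ℤ) * ((0:ℕ) : ℤ))
      = S.ζ ^ ((J.length % 2) * (J'.length % 2)) := by
    rw [Nat.cast_zero, zero_mul, sub_zero, ← Nat.cast_mul, zpow_natCast]
  rw [hexp] at tw
  have hnJm : Jm.Nodup := hnJ.map S.ϑ_invol.injective
  have hqJm : S.q Jm = S.q J := by simp only [MajoranaSetting.q, hlen]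
  have hcomm : S.C J' * S.C Jm
      = ((-1:ℂ)^(J'.length * J.length)) • (S.C Jm * S.C J') := by
    rw [← hlen]
    apply S.comm_C
    intro i hi j hj he
    rcases List.mem_map.mp hj with ⟨j0, hj0, rfl⟩
    exact (S.ϑ_exch j0).mp (hsubJ j0 hj0) (he ▸ hsubJ' i hi)
  rw [hΘ, tw, star_smul, star_mul, S.star_C J' hnJ', S.star_C Jm hnJm, hqJm,
    smul_mul_assoc, mul_smul_comm, smul_smul, hcomm, smul_smul, smul_smul, smul_smul]
  congr 1
  have hkey := S.key J.length J'.length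
  simp only [Complex.star_def]
  linear_combination S.q J' * S.q J * hkey
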